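/- The function f₂(x,y) = (1/(x−y))·(φ(y)·(x⁴−4x³y+x²y²+6xy³−3y⁴) − φ(x)·(y⁴−4xy³+x²y²+6x³y−3x⁴)), with φ(t) = Σ_{n≥0} t^n/(n+1)!, satisfies f₂(−x+y, −x) = e^{−x} f₂(x,y) for all (x,y) with the relevant denominators nonzero. -/

import Mathlib

noncomputable def phi (t : ℝ) : ℝ := ∑' n : ℕ, t ^ n / (Nat.factorial (n + 1) : ℝ)

noncomputable def f₂ (x y : ℝ) : ℝ :=
  (1 / (x - y)) *
    (phi y * (x ^ 4 - 4 * x ^ 3 * y + x ^ 2 * y ^ 2 + 6 * x * y ^ 3 - 3 * y ^ 4) -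
      phi x * (y ^ 4 - 4 * x * y ^ 3 + x ^ 2 * y ^ 2 + 6 * x ^ 3 * y - 3 * x ^ 4))

lemma phi_zero : phi 0 = 1 := by
  rw [phi, tsum_eq_single 0 (fun n hn => by simp [zero_pow hn])]
  simp

lemma phi_eq (t : ℝ) (ht : t ≠ 0) : phi t = (Real.exp t - 1) / t := by
  have hsum : Summable (fun n : ℕ => t ^ n / (Nat.factorial n : ℝ)) :=
    NormedSpace.expSeries_div_summable t
  have h1 : Real.exp t = ∑' n : ℕ, t ^ n / (Nat.factorial n : ℝ) := by
    rw [Real.exp_eq_exp_ℝ, NormedSpace.exp_eq_tsum_div]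
  have h2 : t * phi t = Real.exp t - 1 := by
    rw [phi, ← tsum_mul_left]
    have h3 : (fun n : ℕ => t * (t ^ n / (Nat.factorial (n+1) : ℝ))) =
        fun n : ℕ => t ^ (n + 1) / ((Nat.factorial (n+1) : ℕ) : ℝ) := by
      funext n; rw [pow_succ]; ring
    rw [h3, h1, hsum.tsum_eq_zero_add]
    simp
  field_simp
  linarith

theorem f₂_covariance (x y : ℝ) (h : x ≠ y) (hy : y ≠ 0) :
    f₂ (-x + y) (-x) = Real.exp (-x) * f₂ x y := by
  have hxy : x - y ≠ 0 := sub_ne_zero.mpr h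
  rcases eq_or_ne x 0 with hx | hx
  · subst hx
    simp only [f₂, phi_zero, neg_zero, zero_add, Real.exp_zero]
    field_simp
    ring
  · have h1 : -x + y ≠ 0 := by intro hc; apply h; linarith
    have h2 : -x ≠ 0 := neg_ne_zero.mpr hx
    rw [f₂, f₂, phi_eq _ h1, phi_eq _ h2, phi_eq _ hx, phi_eq _ hy]
    have e1 : Real.exp (-x + y) = Real.exp y / Real.exp x := by
      rw [Real.exp_add, Real.exp_neg]; ring
    have e2 : Real.exp (-x) = 1 / Real.exp x := by rw [Real.exp_neg]; ring
    rw [e1, e2]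
    have hex := Real.exp_ne_zero x
    field_simp
    ring_nf
    field_simp
    ring
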